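/- In the ring R_2 = Z_4[ω]/(ω²−2), both the group of units (U, ·) and the group of zero divisors (Z, +) have order eight and are isomorphic to Z_4 × Z_2. -/
import Mathlib


open Polynomial

/-- The ring `Z₄[ω]` with `ω² = a + bω`, i.e. `Z₄[X]/(X² − (a + bX))`. -/
abbrev Rring (a b : ZMod 4) := AdjoinRoot ((X : (ZMod 4)[X]) ^ 2 - (C a + C b * X))

/-- The element `ω` of `Rring a b`. -/
noncomputable abbrev w (a b : ZMod 4) : Rring a b := AdjoinRoot.root _

/-- Concrete model of `R₂`. -/
@[ext] structure Rc where
  a : ZMod 4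
  b : ZMod 4
deriving DecidableEq, Fintype

namespace Rc
instance : Add Rc := ⟨fun p q => ⟨p.a + q.a, p.b + q.b⟩⟩
instance : Neg Rc := ⟨fun p => ⟨-p.a, -p.b⟩⟩
instance : Zero Rc := ⟨⟨0, 0⟩⟩
instance : One Rc := ⟨⟨1, 0⟩⟩
instance : Mul Rc := ⟨fun p q => ⟨p.a * q.a + 2 * p.b * q.b, p.a * q.b + p.b * q.a⟩⟩

@[simp] lemma add_a (p q : Rc) : (p + q).a = p.a + q.a := rfl
@[simp] lemma add_b (p q : Rc) : (p + q).b = p.b + q.b := rfl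
@[simp] lemma neg_a (p : Rc) : (-p).a = -p.a := rfl
@[simp] lemma neg_b (p : Rc) : (-p).b = -p.b := rfl
@[simp] lemma zero_a : (0 : Rc).a = 0 := rfl
@[simp] lemma zero_b : (0 : Rc).b = 0 := rfl
@[simp] lemma one_a : (1 : Rc).a = 1 := rfl
@[simp] lemma one_b : (1 : Rc).b = 0 := rfl
@[simp] lemma mul_a (p q : Rc) : (p * q).a = p.a * q.a + 2 * p.b * q.b := rfl
@[simp] lemma mul_b (p q : Rc) : (p * q).b = p.a * q.b + p.b * q.a := rfl

instance : AddCommGroup Rc where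
  add_assoc p q r := by ext <;> simp <;> ring
  zero_add p := by ext <;> simp
  add_zero p := by ext <;> simp
  add_comm p q := by ext <;> simp <;> ring
  neg_add_cancel p := by ext <;> simp
  nsmul := nsmulRec
  zsmul := zsmulRec

instance : CommRing Rc where
  __ := (inferInstance : AddCommGroup Rc)
  mul_assoc p q r := by ext <;> simp <;> ring
  one_mul p := by ext <;> simp
  mul_one p := by ext <;> simp
  left_distrib p q r := by ext <;> simp <;> ring
  right_distrib p q r := by ext <;> simp <;> ring
  mul_comm p q := by ext <;> simp <;> ring
  zero_mul p := by ext <;> simp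
  mul_zero p := by ext <;> simp
end Rc

lemma pdef : ((X : (ZMod 4)[X]) ^ 2 - (C 2 + C 0 * X)) = X ^ 2 - C 2 := by simp

lemma pmonic : ((X : (ZMod 4)[X]) ^ 2 - (C 2 + C 0 * X)).Monic := by
  rw [pdef]; exact Polynomial.monic_X_pow_sub_C _ (by norm_num)

noncomputable def pb : PowerBasis (ZMod 4) (Rring 2 0) := AdjoinRoot.powerBasis' pmonic

instance : Finite (Rring 2 0) := Finite.of_equiv _ pb.basis.equivFun.toEquiv.symm

lemma card16 : Nat.card (Rring 2 0) = 16 := by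
  have h2 : pb.dim = 2 := by
    rw [pb, AdjoinRoot.powerBasis'_dim, pdef]
    haveI : Nontrivial (ZMod 4) := ⟨0, 1, by decide⟩
    exact natDegree_X_pow_sub_C
  rw [Nat.card_congr pb.basis.equivFun.toEquiv, h2]
  simp [Nat.card_eq_fintype_card]

def i0 : ZMod 4 →+* Rc where
  toFun x := ⟨x, 0⟩
  map_one' := rfl
  map_mul' x y := by ext <;> simp
  map_zero' := rfl
  map_add' x y := by ext <;> simp

lemma hx : eval₂ i0 (⟨0, 1⟩ : Rc) ((X : (ZMod 4)[X]) ^ 2 - (C 2 + C 0 * X)) = 0 := by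
  rw [pdef]
  simp only [eval₂_sub, eval₂_X_pow, eval₂_C]
  decide

noncomputable def f : Rring 2 0 →+* Rc := AdjoinRoot.lift i0 ⟨0, 1⟩ hx

lemma fsurj : Function.Surjective f := by
  intro z
  refine ⟨AdjoinRoot.of _ z.a + AdjoinRoot.of _ z.b * AdjoinRoot.root _, ?_⟩
  simp only [f, map_add, map_mul, AdjoinRoot.lift_of, AdjoinRoot.lift_root]
  show (⟨z.a, 0⟩ : Rc) + ⟨z.b, 0⟩ * ⟨0, 1⟩ = z
  ext <;> simp

lemma fbij : Function.Bijective f := by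
  rw [Nat.bijective_iff_surjective_and_card]
  refine ⟨fsurj, ?_⟩
  rw [card16, Nat.card_eq_fintype_card]
  decide

noncomputable def e : Rring 2 0 ≃+* Rc := RingEquiv.ofBijective f fbij
lemma unit_iff (z : Rc) : IsUnit z ↔ (z.a = 1 ∨ z.a = 3) := by
  rw [isUnit_iff_exists_inv]; revert z; decide

def u : Rcˣ := ⟨⟨1, 1⟩, ⟨3, 1⟩, by decide, by decide⟩
def v : Rcˣ := ⟨⟨3, 0⟩, ⟨3, 0⟩, by decide, by decide⟩

def φ : Multiplicative (ZMod 4 × ZMod 2) →* Rcˣ where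
  toFun x := u ^ (Multiplicative.toAdd x).1.val * v ^ (Multiplicative.toAdd x).2.val
  map_one' := by decide
  map_mul' x y := by revert x y; decide

lemma φbij : Function.Bijective φ := by
  constructor
  · intro x y h; revert h; revert x y; decide
  · intro z; revert z; decide

lemma cardRcu : Fintype.card Rcˣ = 8 := by decide
def H' : AddSubgroup Rc where
  carrier := {z | z.a = 0 ∨ z.a = 2}
  add_mem' := by
    have key : ∀ p q : Rc, (p.a = 0 ∨ p.a = 2) → (q.a = 0 ∨ q.a = 2) →
        ((p + q).a = 0 ∨ (p + q).a = 2) := by decide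
    exact fun {p q} hp hq => key p q hp hq
  zero_mem' := by decide
  neg_mem' := by
    have key : ∀ p : Rc, (p.a = 0 ∨ p.a = 2) → ((-p).a = 0 ∨ (-p).a = 2) := by decide
    exact fun {p} hp => key p hp

lemma mem_H' (z : Rc) : z ∈ H' ↔ ¬ IsUnit z := by
  rw [unit_iff]
  show (z.a = 0 ∨ z.a = 2) ↔ _
  revert z; decide

def ψ : ZMod 4 × ZMod 2 →+ Rc where
  toFun p := ⟨2 * (p.2.val : ZMod 4), p.1⟩
  map_zero' := by decide
  map_add' p q := by revert p q; decide

lemma ψmem : ∀ p, ψ p ∈ H' := by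
  have key : ∀ p, ((ψ p).a = 0 ∨ (ψ p).a = 2) := by decide
  exact key

noncomputable def ψ' : ZMod 4 × ZMod 2 →+ H' := ψ.codRestrict H' ψmem

lemma ψ'bij : Function.Bijective ψ' := by
  constructor
  · intro p q h
    have h2 : ψ p = ψ q := congrArg Subtype.val h
    revert h2; have key : ∀ p q, ψ p = ψ q → p = q := by decide
    exact key p q
  · rintro ⟨z, hz⟩
    have key : ∀ z : Rc, (z.a = 0 ∨ z.a = 2) → ∃ p, ψ p = z := by decide
    obtain ⟨p, hp⟩ := key z hz
    exact ⟨p, Subtype.ext hp⟩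

noncomputable def eqH' : (ZMod 4 × ZMod 2) ≃+ H' := AddEquiv.ofBijective ψ' ψ'bij

noncomputable def Hfin : AddSubgroup (Rring 2 0) := AddSubgroup.map (e.symm : Rc ≃+* Rring 2 0).toAddEquiv.toAddMonoidHom H'

lemma isUnit_e (x : Rring 2 0) : IsUnit (e x) ↔ IsUnit x := by
  constructor
  · intro h
    have := h.map (e.symm : Rc →+* Rring 2 0)
    simpa using this
  · intro h; exact h.map (e : Rring 2 0 →+* Rc)

lemma mem_Hfin (x : Rring 2 0) : x ∈ Hfin ↔ ¬ IsUnit x := by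
  rw [← isUnit_e x, ← mem_H']
  constructor
  · rintro ⟨y, hy, rfl⟩
    simpa using hy
  · intro h
    exact ⟨e x, h, by simp⟩

noncomputable def Hequiv : Hfin ≃+ ZMod 4 × ZMod 2 :=
  ((AddEquiv.addSubgroupMap (e.symm : Rc ≃+* Rring 2 0).toAddEquiv H').symm.trans eqH'.symm)

/-- In `R₂`, the unit group and the additive group of zero divisors (non-units)
both have order 8 and are both isomorphic to `Z₄ × Z₂`. -/
theorem stmt1 :
    Nat.card (Rring 2 0)ˣ = 8 ∧
    Nonempty ((Rring 2 0)ˣ ≃* Multiplicative (ZMod 4 × ZMod 2)) ∧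
    ∃ H : AddSubgroup (Rring 2 0),
      (H : Set (Rring 2 0)) = {x : Rring 2 0 | ¬ IsUnit x} ∧
      Nat.card H = 8 ∧ Nonempty (H ≃+ ZMod 4 × ZMod 2) := by
  refine ⟨?_, ⟨(Units.mapEquiv e.toMulEquiv).trans (MulEquiv.ofBijective φ φbij).symm⟩,
    Hfin, ?_, ?_, ⟨Hequiv⟩⟩
  · rw [Nat.card_congr (Units.mapEquiv e.toMulEquiv).toEquiv, Nat.card_eq_fintype_card, cardRcu]
  · ext x; exact mem_Hfin x
  · rw [Nat.card_congr Hequiv.toEquiv]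
    simp [Nat.card_eq_fintype_card]
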